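/- For any y \in \mathbb{Z}^2 \setminus \{0\}, the function x \mapsto \widehat{G}(x,y) is harmonic for the conditioned walk on \mathbb{Z}^2 \setminus \{0, y\}; equivalently, the process \widehat{G}(\widehat{S}_{n \wedge \widehat{\tau}_y}, y) is a martingale. -/

import Mathlib

open Filter
open scoped Classical

/-- The two-dimensional integer lattice. -/
abbrev Z2 := ℤ × ℤ

/-- Euclidean norm on `Z2`. -/
noncomputable def nrm (x : Z2) : ℝ := Real.sqrt ((x.1 : ℝ) ^ 2 + (x.2 : ℝ) ^ 2)

/-- Nearest-neighbour relation on `Z2`. -/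
def nbr (x y : Z2) : Prop := (x.1 - y.1).natAbs + (x.2 - y.2).natAbs = 1

/-- `srwP n x = P_x[S_n = 0]`, the n-step probability for the simple random walk on `Z2`
to be at the origin, defined by first-step decomposition. -/
noncomputable def srwP : ℕ → Z2 → ℝ
  | 0, x => if x = 0 then 1 else 0
  | n + 1, x =>
      (srwP n (x + (1, 0)) + srwP n (x - (1, 0)) + srwP n (x + (0, 1)) + srwP n (x - (0, 1))) / 4

/-- `a` is the potential kernel of the 2D simple random walk:
`a x = ∑_{k=0}^∞ (P_0[S_k = 0] - P_x[S_k = 0])` (convergence of the series). -/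
def IsPotentialKernel (a : Z2 → ℝ) : Prop :=
  ∀ x : Z2,
    Tendsto (fun N => ∑ k ∈ Finset.range N, (srwP k 0 - srwP k x)) atTop (nhds (a x))

/-- Transition matrix of the conditioned walk `Ŝ` (Doob h-transform by `a`):
`P̂(x,y) = a(y) / (4 a(x))` when `x ∼ y`, `x ≠ 0`, `y ≠ 0`, and `0` otherwise. -/
noncomputable def Phat (a : Z2 → ℝ) (x y : Z2) : ℝ :=
  if nbr x y ∧ x ≠ 0 ∧ y ≠ 0 then a y / (4 * a x) else 0

/-- n-step transition probabilities of the conditioned walk. -/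
noncomputable def phat (a : Z2 → ℝ) : ℕ → Z2 → Z2 → ℝ
  | 0, x, y => if x = y then 1 else 0
  | n + 1, x, y => ∑' z, Phat a x z * phat a n z y

/-- Green's function of the conditioned walk: expected number of visits to `y` from `x`. -/
noncomputable def Ghat (a : Z2 → ℝ) (x y : Z2) : ℝ := ∑' n, phat a n x y

/-- `hitLE a A n x = P_x[τ̂_A ≤ n]` for the conditioned walk (entrance time, `τ̂_A = min{n ≥ 0 : Ŝ_n ∈ A}`). -/
noncomputable def hitLE (a : Z2 → ℝ) (A : Set Z2) : ℕ → Z2 → ℝ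
  | 0, x => if x ∈ A then 1 else 0
  | n + 1, x => if x ∈ A then 1 else ∑' z, Phat a x z * hitLE a A n z

/-- `hitProb a A x = P_x[τ̂_A < ∞]` for the conditioned walk. -/
noncomputable def hitProb (a : Z2 → ℝ) (A : Set Z2) (x : Z2) : ℝ := ⨆ n, hitLE a A n x

/-- `retLE a A n x = P_x[τ̂⁺_A ≤ n]`, where `τ̂⁺_A = min{n ≥ 1 : Ŝ_n ∈ A}`. -/
noncomputable def retLE (a : Z2 → ℝ) (A : Set Z2) : ℕ → Z2 → ℝ
  | 0, _ => 0
  | n + 1, x => ∑' z, Phat a x z * hitLE a A n z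

/-- `retProb a A x = P_x[τ̂⁺_A < ∞]` for the conditioned walk. -/
noncomputable def retProb (a : Z2 → ℝ) (A : Set Z2) (x : Z2) : ℝ := ⨆ n, retLE a A n x

/-- `beforeLE a A B n x = P_x[τ̂_A ≤ n and τ̂_A < τ̂_B]`. -/
noncomputable def beforeLE (a : Z2 → ℝ) (A B : Set Z2) : ℕ → Z2 → ℝ
  | 0, x => if x ∈ A then 1 else 0
  | n + 1, x =>
      if x ∈ A then 1 else if x ∈ B then 0 else ∑' z, Phat a x z * beforeLE a A B n z

/-- `beforeProb a A B x = P_x[τ̂_A < τ̂_B]` for the conditioned walk. -/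
noncomputable def beforeProb (a : Z2 → ℝ) (A B : Set Z2) (x : Z2) : ℝ := ⨆ n, beforeLE a A B n x

/-- `entLE a A y n x = P_x[τ̂_A ≤ n, Ŝ_{τ̂_A} = y]`. -/
noncomputable def entLE (a : Z2 → ℝ) (A : Set Z2) (y : Z2) : ℕ → Z2 → ℝ
  | 0, x => if x ∈ A ∧ x = y then 1 else 0
  | n + 1, x =>
      if x ∈ A then (if x = y then 1 else 0) else ∑' z, Phat a x z * entLE a A y n z

/-- `entProb a A y x = P_x[τ̂_A < ∞, Ŝ_{τ̂_A} = y]`. -/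
noncomputable def entProb (a : Z2 → ℝ) (A : Set Z2) (y x : Z2) : ℝ := ⨆ n, entLE a A y n x

/-- `visitsGE a y n t x = P_x[#{0 ≤ j ≤ t : Ŝ_j = y} ≥ n]`. -/
noncomputable def visitsGE (a : Z2 → ℝ) (y : Z2) : ℕ → ℕ → Z2 → ℝ
  | 0, _, _ => 1
  | n + 1, 0, x => if x = y ∧ n = 0 then 1 else 0
  | n + 1, t + 1, x =>
      if x = y then ∑' z, Phat a x z * visitsGE a y n t z
      else ∑' z, Phat a x z * visitsGE a y (n + 1) t z

/-- The symmetrized Green's function `ĝ(x,y) = Ĝ(x,y)/a(y)² = (a(x)+a(y)-a(x-y))/(a(x)a(y))`. -/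
noncomputable def ghat (a : Z2 → ℝ) (x y : Z2) : ℝ := (a x + a y - a (x - y)) / (a x * a y)

/-- The discrete disk `B(y, r)` in `Z2`. -/
def diskB (y : Z2) (r : ℝ) : Set Z2 := {z : Z2 | nrm (z - y) ≤ r}

/-- Inner boundary of a set of `Z2`. -/
def innerBd (A : Set Z2) : Set Z2 := {z : Z2 | z ∈ A ∧ ∃ w, nbr z w ∧ w ∉ A}

/-- Distance from a point to a set. -/
noncomputable def distSet (x : Z2) (A : Set Z2) : ℝ := sInf ((fun y => nrm (x - y)) '' A)

/-- Diameter of a set. -/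
noncomputable def diamSet (A : Set Z2) : ℝ :=
  sSup ((fun p : Z2 × Z2 => nrm (p.1 - p.2)) '' (A ×ˢ A))

/-- Escape probability from `y ∈ A` for the conditioned walk: `P_y[τ̂⁺_A = ∞]`. -/
noncomputable def hatEs (a : Z2 → ℝ) (A : Set Z2) (y : Z2) : ℝ :=
  if y ∈ A then 1 - retProb a A y else 0

/-- Capacity of a finite set for the conditioned walk. -/
noncomputable def hatCap (a : Z2 → ℝ) (A : Finset Z2) : ℝ :=
  ∑ y ∈ A, (a y) ^ 2 * hatEs a (↑A) y

/-- Harmonic measure of the conditioned walk on a finite set. -/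
noncomputable def hatHm (a : Z2 → ℝ) (A : Finset Z2) (y : Z2) : ℝ :=
  (a y) ^ 2 * hatEs a (↑A) y / hatCap a A

lemma srwP_nonneg : ∀ (n : ℕ) (x : Z2), 0 ≤ srwP n x := by
  intro n
  induction n with
  | zero => intro x; simp only [srwP]; positivity
  | succ n ih =>
    intro x; simp only [srwP]
    have := ih (x + (1,0)); have := ih (x - (1,0))
    have := ih (x + (0,1)); have := ih (x - (0,1))
    linarith

lemma srwP_succ (n : ℕ) (x : Z2) :
    srwP (n+1) x = (srwP n (x + (1,0)) + srwP n (x - (1,0)) + srwP n (x + (0,1)) + srwP n (x - (0,1))) / 4 := rfl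

lemma srwP_zero_def (x : Z2) : srwP 0 x = if x = 0 then 1 else 0 := rfl

lemma srwP_parity : ∀ (n : ℕ) (x : Z2), ¬ (2 ∣ ((n : ℤ) + x.1 + x.2)) → srwP n x = 0 := by
  intro n
  induction n with
  | zero =>
    intro x h
    rw [srwP_zero_def]
    split
    · next hx => subst hx; simp at h
    · rfl
  | succ n ih =>
    intro x h
    rw [srwP_succ]
    have h1 : srwP n (x + (1,0)) = 0 := by
      apply ih; simp only [Prod.fst_add, Prod.snd_add]; push_cast; omega
    have h2 : srwP n (x - (1,0)) = 0 := by
      apply ih; simp only [Prod.fst_sub, Prod.snd_sub]; push_cast; omega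
    have h3 : srwP n (x + (0,1)) = 0 := by
      apply ih; simp only [Prod.fst_add, Prod.snd_add]; push_cast; omega
    have h4 : srwP n (x - (0,1)) = 0 := by
      apply ih; simp only [Prod.fst_sub, Prod.snd_sub]; push_cast; omega
    rw [h1, h2, h3, h4]; norm_num

lemma srwP_odd_zero (k : ℕ) : srwP (2*k+1) 0 = 0 := by
  apply srwP_parity
  show ¬ (2 ∣ (((2*k+1 : ℕ) : ℤ) + 0 + 0))
  push_cast
  omega
noncomputable def AA (N : ℕ) (x : Z2) : ℝ := ∑ k ∈ Finset.range N, (srwP k 0 - srwP k x)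

lemma AA_zero (N : ℕ) : AA N 0 = 0 := by simp [AA]

lemma srwP_succ' (n : ℕ) (p q : ℤ) :
    srwP (n+1) (p,q) = (srwP n (p+1,q) + srwP n (p-1,q) + srwP n (p,q+1) + srwP n (p,q-1))/4 := by
  rw [srwP_succ]
  norm_num [Prod.mk_add_mk, Prod.mk_sub_mk]

lemma AA_rec (N : ℕ) (x : Z2) (hx : x ≠ 0) :
    AA (N+1) x = (AA N (x+(1,0)) + AA N (x-(1,0)) + AA N (x+(0,1)) + AA N (x-(0,1)))/4 + srwP N 0 := by
  induction N with
  | zero =>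
    norm_num [AA, srwP_zero_def, hx]
  | succ N ih =>
    have e1 : AA (N+1+1) x = AA (N+1) x + (srwP (N+1) 0 - srwP (N+1) x) := by
      simp [AA, Finset.sum_range_succ]; ring
    have e2 : ∀ z : Z2, AA (N+1) z = AA N z + (srwP N 0 - srwP N z) := by
      intro z; simp [AA, Finset.sum_range_succ]; ring
    have e3 := srwP_succ N x
    rw [e1, ih, e2, e2, e2, e2, e3]
    ring

lemma srwP_succ_zero (N : ℕ) :
    srwP (N+1) (0:Z2) = (srwP N (1,0) + srwP N (-1,0) + srwP N (0,1) + srwP N (0,-1))/4 := by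
  have : ((0:Z2) = ((0:ℤ),(0:ℤ))) := rfl
  rw [this, srwP_succ']
  norm_num

lemma AA_rec0 (N : ℕ) :
    (AA N ((1,0):Z2) + AA N ((-1,0):Z2) + AA N ((0,1):Z2) + AA N ((0,-1):Z2))/4 = 1 - srwP N 0 := by
  induction N with
  | zero => simp [AA, srwP_zero_def]
  | succ N ih =>
    have e2 : ∀ z : Z2, AA (N+1) z = AA N z + (srwP N 0 - srwP N z) := by
      intro z; simp [AA, Finset.sum_range_succ]; ring
    rw [e2, e2, e2, e2, srwP_succ_zero]
    linarith

lemma AA_nonneg : ∀ (N : ℕ) (x : Z2), 0 ≤ AA N x := by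
  intro N
  induction N with
  | zero => intro x; simp [AA]
  | succ N ih =>
    intro x
    by_cases hx : x = 0
    · rw [hx, AA_zero]
    · rw [AA_rec N x hx]
      have := ih (x + (1,0)); have := ih (x - (1,0))
      have := ih (x + (0,1)); have := ih (x - (0,1))
      have := srwP_nonneg N 0
      linarith

lemma tendsto_AA {a : Z2 → ℝ} (ha : IsPotentialKernel a) (x : Z2) : Filter.Tendsto (fun N => AA N x) atTop (nhds (a x)) := ha x

lemma a_nonneg {a : Z2 → ℝ} (ha : IsPotentialKernel a) (x : Z2) : 0 ≤ a x :=
  ge_of_tendsto' (tendsto_AA ha x) (fun N => AA_nonneg N x)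

lemma a_zero {a : Z2 → ℝ} (ha : IsPotentialKernel a) : a 0 = 0 := by
  have h1 := tendsto_AA ha 0
  have h2 : Filter.Tendsto (fun N => AA N (0:Z2)) atTop (nhds 0) := by
    simp only [AA_zero]; exact tendsto_const_nhds
  exact tendsto_nhds_unique h1 h2

lemma tendsto_srwP0 {a : Z2 → ℝ} (ha : IsPotentialKernel a) : Filter.Tendsto (fun N => srwP N 0) atTop (nhds 0) := by
  set x₀ : Z2 := (2,0) with hx₀
  have hx : x₀ ≠ 0 := by simp [hx₀, Prod.ext_iff]
  have key : ∀ N, srwP N 0 =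
      AA (N+1) x₀ - (AA N (x₀+(1,0)) + AA N (x₀-(1,0)) + AA N (x₀+(0,1)) + AA N (x₀-(0,1)))/4 := by
    intro N; rw [AA_rec N x₀ hx]; ring
  set L : ℝ := a x₀ - (a (x₀+(1,0)) + a (x₀-(1,0)) + a (x₀+(0,1)) + a (x₀-(0,1)))/4 with hL
  have h1 : Filter.Tendsto (fun N => srwP N 0) atTop (nhds L) := by
    have hA : Filter.Tendsto (fun N => AA (N+1) x₀) atTop (nhds (a x₀)) :=
      (tendsto_AA ha x₀).comp (Filter.tendsto_add_atTop_nat 1)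
    have hB := ((((tendsto_AA ha (x₀+(1,0))).add (tendsto_AA ha (x₀-(1,0)))).add
      (tendsto_AA ha (x₀+(0,1)))).add (tendsto_AA ha (x₀-(0,1)))).div_const (4:ℝ)
    have := hA.sub hB
    simp only [← key] at this
    convert this using 2 <;> ring
  have hodd : Filter.Tendsto (fun k : ℕ => 2*k+1) atTop atTop :=
    Filter.tendsto_atTop_atTop_of_monotone (fun a b h => by omega) (fun b => ⟨b, by omega⟩)
  have h2 : Filter.Tendsto (fun k : ℕ => srwP (2*k+1) 0) atTop (nhds L) := h1.comp hodd
  have h3 : Filter.Tendsto (fun k : ℕ => srwP (2*k+1) 0) atTop (nhds 0) := by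
    simp only [srwP_odd_zero]; exact tendsto_const_nhds
  have : L = 0 := tendsto_nhds_unique h2 h3
  rwa [this] at h1

lemma a_harm {a : Z2 → ℝ} (ha : IsPotentialKernel a) (x : Z2) (hx : x ≠ 0) :
    a x = (a (x+(1,0)) + a (x-(1,0)) + a (x+(0,1)) + a (x-(0,1)))/4 := by
  have hA : Filter.Tendsto (fun N => AA (N+1) x) atTop (nhds (a x)) :=
    (tendsto_AA ha x).comp (Filter.tendsto_add_atTop_nat 1)
  have hB : Filter.Tendsto (fun N => AA (N+1) x) atTop
      (nhds ((a (x+(1,0)) + a (x-(1,0)) + a (x+(0,1)) + a (x-(0,1)))/4 + 0)) := by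
    have h1 := ((((tendsto_AA ha (x+(1,0))).add (tendsto_AA ha (x-(1,0)))).add
      (tendsto_AA ha (x+(0,1)))).add (tendsto_AA ha (x-(0,1)))).div_const (4:ℝ)
    have h2 := h1.add (tendsto_srwP0 ha)
    have : (fun N => (AA N (x+(1,0)) + AA N (x-(1,0)) + AA N (x+(0,1)) + AA N (x-(0,1)))/4 + srwP N 0)
        = fun N => AA (N+1) x := by
      funext N; rw [AA_rec N x hx]
    rwa [this] at h2
  have := tendsto_nhds_unique hA hB
  rw [this]; ring

lemma nbr0_sum {a : Z2 → ℝ} (ha : IsPotentialKernel a) : a (1,0) + a (-1,0) + a (0,1) + a (0,-1) = 4 := by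
  have hA : Filter.Tendsto
      (fun N => (AA N ((1,0):Z2) + AA N ((-1,0):Z2) + AA N ((0,1):Z2) + AA N ((0,-1):Z2))/4)
      atTop (nhds ((a (1,0) + a (-1,0) + a (0,1) + a (0,-1))/4)) :=
    ((((tendsto_AA ha (1,0)).add (tendsto_AA ha (-1,0))).add
      (tendsto_AA ha (0,1))).add (tendsto_AA ha (0,-1))).div_const (4:ℝ)
  have hB : Filter.Tendsto
      (fun N => (AA N ((1,0):Z2) + AA N ((-1,0):Z2) + AA N ((0,1):Z2) + AA N ((0,-1):Z2))/4)
      atTop (nhds (1 - 0)) := by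
    simp only [AA_rec0]
    exact tendsto_const_nhds.sub (tendsto_srwP0 ha)
  have := tendsto_nhds_unique hA hB
  linarith

lemma srwP_zero_def' (p q : ℤ) : srwP 0 (p,q) = if p = 0 ∧ q = 0 then 1 else 0 := by
  rw [srwP_zero_def]
  simp [Prod.ext_iff]

lemma srwP_negfst : ∀ (n : ℕ) (p q : ℤ), srwP n (-p, q) = srwP n (p, q) := by
  intro n
  induction n with
  | zero => intro p q; rw [srwP_zero_def', srwP_zero_def']; simp [neg_eq_zero]
  | succ n ih =>
    intro p q
    rw [srwP_succ', srwP_succ']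
    have h1 : (-p+1 : ℤ) = -(p-1) := by ring
    have h2 : (-p-1 : ℤ) = -(p+1) := by ring
    rw [h1, h2, ih (p-1) q, ih (p+1) q, ih p (q+1), ih p (q-1)]
    ring

lemma srwP_negsnd : ∀ (n : ℕ) (p q : ℤ), srwP n (p, -q) = srwP n (p, q) := by
  intro n
  induction n with
  | zero => intro p q; rw [srwP_zero_def', srwP_zero_def']; simp [neg_eq_zero]
  | succ n ih =>
    intro p q
    rw [srwP_succ', srwP_succ']
    have h1 : (-q+1 : ℤ) = -(q-1) := by ring
    have h2 : (-q-1 : ℤ) = -(q+1) := by ring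
    rw [h1, h2, ih (p+1) q, ih (p-1) q, ih p (q-1), ih p (q+1)]
    ring

lemma srwP_swap : ∀ (n : ℕ) (p q : ℤ), srwP n (q, p) = srwP n (p, q) := by
  intro n
  induction n with
  | zero => intro p q; rw [srwP_zero_def', srwP_zero_def']; simp [and_comm]
  | succ n ih =>
    intro p q
    rw [srwP_succ', srwP_succ']
    rw [ih (q+1) p, ih (q-1) p, ih q (p+1), ih q (p-1)]
    ring

lemma a_eq_of {a : Z2 → ℝ} (ha : IsPotentialKernel a) {x x' : Z2}
    (h : ∀ k, srwP k x = srwP k x') : a x = a x' := by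
  have h1 := tendsto_AA ha x
  have h2 := tendsto_AA ha x'
  have he : (fun N => AA N x) = (fun N => AA N x') := by
    funext N
    exact Finset.sum_congr rfl (fun k _ => by rw [h k])
  rw [he] at h1
  exact tendsto_nhds_unique h1 h2

lemma a_nbr0 {a : Z2 → ℝ} (ha : IsPotentialKernel a) :
    a (1,0) = 1 ∧ a (-1,0) = 1 ∧ a (0,1) = 1 ∧ a (0,-1) = 1 := by
  have hsum := nbr0_sum ha
  have e1 : a ((-1,0) : Z2) = a ((1,0) : Z2) := a_eq_of ha (fun k => srwP_negfst k 1 0)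
  have e2 : a ((0,1) : Z2) = a ((1,0) : Z2) := a_eq_of ha (fun k => srwP_swap k 1 0)
  have e3 : a ((0,-1) : Z2) = a ((0,1) : Z2) := a_eq_of ha (fun k => srwP_negsnd k 0 1)
  refine ⟨by linarith, by linarith, by linarith, by linarith⟩

lemma a_pos {a : Z2 → ℝ} (ha : IsPotentialKernel a) : ∀ x : Z2, x ≠ 0 → 0 < a x := by
  have key : ∀ (m : ℕ) (x : Z2), x ≠ 0 → (x.1 - 1).natAbs + x.2.natAbs = m → a x ≠ 0 := by
    intro m
    induction m using Nat.strong_induction_on with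
    | _ m IH =>
      intro x hx hm hzero
      obtain ⟨h10, hm10, h01, h0m1⟩ := a_nbr0 ha
      -- x is not one of the four neighbours of 0
      have hx1 : x ≠ ((1,0) : Z2) := fun h => by rw [h, h10] at hzero; norm_num at hzero
      have hx2 : x ≠ ((-1,0) : Z2) := fun h => by rw [h, hm10] at hzero; norm_num at hzero
      have hx3 : x ≠ ((0,1) : Z2) := fun h => by rw [h, h01] at hzero; norm_num at hzero
      have hx4 : x ≠ ((0,-1) : Z2) := fun h => by rw [h, h0m1] at hzero; norm_num at hzero
      -- all four neighbours have a = 0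
      have hh := a_harm ha x hx
      have n1 := a_nonneg ha (x + (1,0)); have n2 := a_nonneg ha (x - (1,0))
      have n3 := a_nonneg ha (x + (0,1)); have n4 := a_nonneg ha (x - (0,1))
      have z1 : a (x + (1,0)) = 0 := by linarith
      have z2 : a (x - (1,0)) = 0 := by linarith
      have z3 : a (x + (0,1)) = 0 := by linarith
      have z4 : a (x - (0,1)) = 0 := by linarith
      -- coordinates
      have hxne : x.1 ≠ 0 ∨ x.2 ≠ 0 := by
        by_contra hc
        push_neg at hc
        exact hx (Prod.ext hc.1 hc.2)
      have hnbr : x.1 ≠ 0 ∨ x.2.natAbs ≠ 1 := by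
        by_contra hc
        push_neg at hc
        obtain ⟨hc1, hc2⟩ := hc
        rcases Int.natAbs_eq_iff.mp hc2 with h | h
        · exact hx3 (Prod.ext hc1 h)
        · exact hx4 (Prod.ext hc1 (by simpa using h))
      have hnbr' : x.2 ≠ 0 ∨ x.1.natAbs ≠ 1 := by
        by_contra hc
        push_neg at hc
        obtain ⟨hc1, hc2⟩ := hc
        rcases Int.natAbs_eq_iff.mp hc2 with h | h
        · exact hx1 (Prod.ext h hc1)
        · exact hx2 (Prod.ext (by simpa using h) hc1)
      by_cases hfst : x.1 = 1
      · -- then x.2 ≠ 0 (else x = (1,0)); move x.2 toward 0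
        have hx2ne : x.2 ≠ 0 := by
          intro h; exact hx1 (Prod.ext hfst h)
        by_cases hsgn : 0 < x.2
        · refine IH ((x.1-1).natAbs + (x.2-1).natAbs) (by omega) (x - (0,1)) ?_ ?_ z4
          · intro h
            rw [Prod.ext_iff] at h
            simp at h
            have : x.1 = 0 ∧ x.2 = 1 := by constructor <;> omega
            exact hx3 (Prod.ext this.1 this.2)
          · simp
        · refine IH ((x.1-1).natAbs + (x.2+1).natAbs) (by omega) (x + (0,1)) ?_ ?_ z3
          · intro h
            rw [Prod.ext_iff] at h
            simp at h
            have : x.1 = 0 ∧ x.2 = -1 := by constructor <;> omega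
            exact hx4 (Prod.ext this.1 this.2)
          · simp
      · by_cases hsgn : x.1 < 1
        · refine IH ((x.1+1-1).natAbs + x.2.natAbs) (by omega) (x + (1,0)) ?_ ?_ z1
          · intro h
            rw [Prod.ext_iff] at h
            simp at h
            have : x.1 = -1 ∧ x.2 = 0 := by constructor <;> omega
            exact hx2 (Prod.ext this.1 this.2)
          · simp
        · refine IH ((x.1-1-1).natAbs + x.2.natAbs) (by omega) (x - (1,0)) ?_ ?_ z2
          · intro h
            rw [Prod.ext_iff] at h
            simp at h
            have : x.1 = 1 ∧ x.2 = 0 := by constructor <;> omega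
            exact hx1 (Prod.ext this.1 this.2)
          · simp
  intro x hx
  rcases lt_or_eq_of_le (a_nonneg ha x) with h | h
  · exact h
  · exact absurd h.symm (key _ x hx rfl)
open scoped ENNReal NNReal in
lemma _dummy_open : True := trivial

def nbrsF (x : Z2) : Finset Z2 := {x + (1,0), x - (1,0), x + (0,1), x - (0,1)}

lemma mem_nbrsF_iff (x z : Z2) : z ∈ nbrsF x ↔ nbr x z := by
  simp [nbrsF, nbr, Prod.ext_iff]
  omega

lemma nbr_symm {x z : Z2} (h : nbr x z) : nbr z x := by
  unfold nbr at *
  omega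

lemma Phat_nonneg {a : Z2 → ℝ} (ha : IsPotentialKernel a) (x z : Z2) : 0 ≤ Phat a x z := by
  unfold Phat
  split
  · exact div_nonneg (a_nonneg ha z) (by have := a_nonneg ha x; linarith)
  · exact le_refl 0

lemma Phat_eq_zero_of_not_nbr {a : Z2 → ℝ} {x z : Z2} (h : z ∉ nbrsF x) : Phat a x z = 0 := by
  rw [Phat, if_neg]
  intro hc
  exact h ((mem_nbrsF_iff x z).mpr hc.1)

lemma Phat_zero_left {a : Z2 → ℝ} (z : Z2) : Phat a 0 z = 0 := by
  rw [Phat, if_neg]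
  intro hc
  exact hc.2.1 rfl

lemma Phat_snd_zero {a : Z2 → ℝ} (x : Z2) : Phat a x 0 = 0 := by
  rw [Phat, if_neg]
  intro hc
  exact hc.2.2 rfl

lemma Phat_pos {a : Z2 → ℝ} (ha : IsPotentialKernel a) {x z : Z2}
    (hn : nbr x z) (hx : x ≠ 0) (hz : z ≠ 0) : 0 < Phat a x z := by
  rw [Phat, if_pos ⟨hn, hx, hz⟩]
  exact div_pos (a_pos ha z hz) (by have := a_pos ha x hx; linarith)

lemma phat_zero_def (a : Z2 → ℝ) (x y : Z2) : phat a 0 x y = if x = y then 1 else 0 := rfl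

lemma phat_succ_def (a : Z2 → ℝ) (n : ℕ) (x y : Z2) :
    phat a (n+1) x y = ∑' z, Phat a x z * phat a n z y := rfl

lemma phat_succ_sum (a : Z2 → ℝ) (n : ℕ) (x y : Z2) :
    phat a (n+1) x y = ∑ z ∈ nbrsF x, Phat a x z * phat a n z y := by
  rw [phat_succ_def]
  exact tsum_eq_sum (fun z hz => by rw [Phat_eq_zero_of_not_nbr hz, zero_mul])

lemma phat_nonneg {a : Z2 → ℝ} (ha : IsPotentialKernel a) :
    ∀ (n : ℕ) (x y : Z2), 0 ≤ phat a n x y := by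
  intro n
  induction n with
  | zero => intro x y; rw [phat_zero_def]; split <;> norm_num
  | succ n ih =>
    intro x y
    rw [phat_succ_sum]
    exact Finset.sum_nonneg (fun z _ => mul_nonneg (Phat_nonneg ha x z) (ih z y))

lemma phat_origin {a : Z2 → ℝ} {y : Z2} (hy : y ≠ 0) :
    ∀ n : ℕ, phat a n 0 y = 0 := by
  intro n
  cases n with
  | zero => rw [phat_zero_def, if_neg (fun h => hy h.symm)]
  | succ n =>
    rw [phat_succ_def]
    simp [Phat_zero_left]

open scoped ENNReal NNReal

/-- ENNReal-valued Green's function of the conditioned walk. -/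
noncomputable def GE (a : Z2 → ℝ) (y x : Z2) : ℝ≥0∞ := ∑' n, ENNReal.ofReal (phat a n x y)

lemma GE_identity {a : Z2 → ℝ} (ha : IsPotentialKernel a) (y : Z2) (x : Z2) :
    GE a y x = (if x = y then 1 else 0)
      + ∑ z ∈ nbrsF x, ENNReal.ofReal (Phat a x z) * GE a y z := by
  have h0 : GE a y x = ENNReal.ofReal (phat a 0 x y)
      + ∑' n, ENNReal.ofReal (phat a (n+1) x y) := by
    unfold GE
    exact tsum_eq_zero_add' ENNReal.summable
  have h1 : ∀ n, ENNReal.ofReal (phat a (n+1) x y)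
      = ∑ z ∈ nbrsF x, ENNReal.ofReal (Phat a x z) * ENNReal.ofReal (phat a n z y) := by
    intro n
    rw [phat_succ_sum, ENNReal.ofReal_sum_of_nonneg
      (fun z _ => mul_nonneg (Phat_nonneg ha x z) (phat_nonneg ha n z y))]
    exact Finset.sum_congr rfl (fun z _ => ENNReal.ofReal_mul (Phat_nonneg ha x z))
  rw [h0]
  congr 1
  · rw [phat_zero_def]
    split <;> simp
  · simp only [h1]
    rw [Summable.tsum_finsetSum (fun z _ => ENNReal.summable)]
    exact Finset.sum_congr rfl (fun z _ => ENNReal.tsum_mul_left)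

lemma GE_origin {a : Z2 → ℝ} {y : Z2} (hy : y ≠ 0) : GE a y 0 = 0 := by
  rw [GE]
  simp [phat_origin hy]

lemma GE_term_le {a : Z2 → ℝ} (ha : IsPotentialKernel a) (y : Z2) (x z : Z2) (hz : z ∈ nbrsF x) :
    ENNReal.ofReal (Phat a x z) * GE a y z ≤ GE a y x := by
  rw [GE_identity ha y x]
  calc ENNReal.ofReal (Phat a x z) * GE a y z
      ≤ ∑ w ∈ nbrsF x, ENNReal.ofReal (Phat a x w) * GE a y w :=
        Finset.single_le_sum (f := fun w => ENNReal.ofReal (Phat a x w) * GE a y w) (fun w _ => zero_le) hz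
    _ ≤ _ := le_add_self

lemma Ghat_of_finite {a : Z2 → ℝ} (ha : IsPotentialKernel a) {y x : Z2} (hfin : GE a y x ≠ ⊤) :
    Summable (fun n => phat a n x y) ∧ Ghat a x y = (GE a y x).toReal := by
  set g : ℕ → ℝ≥0 := fun n => ⟨phat a n x y, phat_nonneg ha n x y⟩ with hg
  have hco : ∀ n, (g n : ℝ≥0∞) = ENNReal.ofReal (phat a n x y) := by
    intro n
    rw [ENNReal.ofReal_eq_coe_nnreal (phat_nonneg ha n x y)]; rfl
  have htop : ∑' n, (g n : ℝ≥0∞) ≠ ⊤ := by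
    simp only [hco]; exact hfin
  have hsumg : Summable g := ENNReal.tsum_coe_ne_top_iff_summable.mp htop
  have hsum : Summable (fun n => phat a n x y) := by
    have := NNReal.summable_coe.mpr hsumg
    exact this
  refine ⟨hsum, ?_⟩
  have h1 : GE a y x = ((∑' n, g n : ℝ≥0) : ℝ≥0∞) := by
    rw [ENNReal.coe_tsum hsumg, GE]
    simp only [hco]
  rw [h1, ENNReal.coe_toReal, Ghat, NNReal.coe_tsum]
  exact tsum_congr fun n => rfl

lemma Ghat_of_infinite {a : Z2 → ℝ} (ha : IsPotentialKernel a) {y x : Z2} (hinf : GE a y x = ⊤) : Ghat a x y = 0 := by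
  apply tsum_eq_zero_of_not_summable
  intro hsum
  set g : ℕ → ℝ≥0 := fun n => ⟨phat a n x y, phat_nonneg ha n x y⟩ with hg
  have hsumg : Summable g := by
    rw [← NNReal.summable_coe]
    exact hsum
  have : GE a y x ≠ ⊤ := by
    rw [GE]
    have hco : ∀ n, ENNReal.ofReal (phat a n x y) = (g n : ℝ≥0∞) := by
      intro n; rw [ENNReal.ofReal_eq_coe_nnreal (phat_nonneg ha n x y)]; rfl
    simp only [hco]
    rw [← ENNReal.coe_tsum hsumg]
    exact ENNReal.coe_ne_top
  exact this hinf

/-- for fixed `y ≠ 0`, the map `x ↦ Ĝ(x,y)` is harmonic for the conditioned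
walk on `Z2 \ {0, y}`; equivalently, `Ĝ(Ŝ_{n ∧ τ̂_y}, y)` is a martingale. -/
theorem Ghat_harmonic (a : Z2 → ℝ) (ha : IsPotentialKernel a) (y : Z2) (hy : y ≠ 0) :
    ∀ x : Z2, x ≠ 0 → x ≠ y → Ghat a x y = ∑' z : Z2, Phat a x z * Ghat a z y := by
  intro x hx hxy
  have hRHS : ∑' z : Z2, Phat a x z * Ghat a z y = ∑ z ∈ nbrsF x, Phat a x z * Ghat a z y :=
    tsum_eq_sum (fun z hz => by rw [Phat_eq_zero_of_not_nbr hz, zero_mul])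
  rw [hRHS]
  by_cases hfin : GE a y x = ⊤
  · rw [Ghat_of_infinite ha hfin]
    symm
    apply Finset.sum_eq_zero
    intro z hz
    by_cases hz0 : z = 0
    · rw [hz0, Phat_snd_zero, zero_mul]
    · have hnzx : nbr z x := nbr_symm ((mem_nbrsF_iff x z).mp hz)
      have hxmem : x ∈ nbrsF z := (mem_nbrsF_iff z x).mpr hnzx
      have hle := GE_term_le ha y z x hxmem
      have hp : 0 < Phat a z x := Phat_pos ha hnzx hz0 hx
      have hne : ENNReal.ofReal (Phat a z x) ≠ 0 := by
        rw [Ne, ENNReal.ofReal_eq_zero]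
        linarith
      have htopeq : ENNReal.ofReal (Phat a z x) * GE a y x = ⊤ := by
        rw [hfin]
        exact ENNReal.mul_top hne
      have htop : GE a y z = ⊤ := top_le_iff.mp (htopeq ▸ hle)
      rw [Ghat_of_infinite ha htop, mul_zero]
  · have hGx := Ghat_of_finite ha hfin
    have hid := GE_identity ha y x
    have hterm : ∀ z ∈ nbrsF x, ENNReal.ofReal (Phat a x z) * GE a y z ≠ ⊤ := fun z hz =>
      ne_top_of_le_ne_top hfin (GE_term_le ha y x z hz)
    have hδ : (if x = y then (1:ℝ≥0∞) else 0) = 0 := if_neg hxy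
    rw [hδ, zero_add] at hid
    rw [hGx.2, hid, ENNReal.toReal_sum hterm]
    apply Finset.sum_congr rfl
    intro z hz
    by_cases hz0 : z = 0
    · rw [hz0, GE_origin hy, mul_zero, ENNReal.toReal_zero, Phat_snd_zero, zero_mul]
    · have hp : 0 < Phat a x z := Phat_pos ha ((mem_nbrsF_iff x z).mp hz) hx hz0
      have hne : ENNReal.ofReal (Phat a x z) ≠ 0 := by
        rw [Ne, ENNReal.ofReal_eq_zero]
        linarith
      have hfz : GE a y z ≠ ⊤ := by
        intro hcontra
        apply hterm z hz
        rw [hcontra]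
        exact ENNReal.mul_top hne
      have hGz := Ghat_of_finite ha hfz
      rw [ENNReal.toReal_mul, ENNReal.toReal_ofReal (Phat_nonneg ha x z), hGz.2]
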